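/- arXiv:1903.03334 — 2 statements merged into one kernel-verified Lean document; each statement's English description precedes it below -/
import Mathlib

section
/- The equality (φ(F_a))' = φ(F_a) ∩ F_b' holds, where G' denotes the commutator (derived) subgroup of a group G; that is, the commutator subgroup of the image φ(F_a) equals the intersection of φ(F_a) with the commutator subgroup of F_b. -/
/-- The generating alphabet `X ⊔ Y ⊔ {y} ⊔ {indexed family over ℕ}`.  In the domain
`F_a` the `ℕ`-indexed generators are the `t_n`; in the codomain `F_b` they are the
`z_n`. -/
abbrev ConstrGen (X Y : Type) : Type := X ⊕ Y ⊕ Unit ⊕ ℕ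

/-- The distinguished generator `y`. -/
def yGen (X Y : Type) : ConstrGen X Y := Sum.inr (Sum.inr (Sum.inl ()))

/-- The `n`-th `ℕ`-indexed generator (`t_n` in `F_a`, `z_n` in `F_b`). -/
def nGen (X Y : Type) (n : ℕ) : ConstrGen X Y := Sum.inr (Sum.inr (Sum.inr n))

/-- The homomorphism `φ : F_a → F_b` which fixes each generator in `X ⊔ Y ⊔ {y}`
and sends `t_n ↦ y·z_{n+1}⁻¹·z_n·z_{n+1}`. -/
def constrPhi (X Y : Type) : FreeGroup (ConstrGen X Y) →* FreeGroup (ConstrGen X Y) :=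
  FreeGroup.lift fun g => match g with
    | Sum.inl x => FreeGroup.of (Sum.inl x)
    | Sum.inr (Sum.inl w) => FreeGroup.of (Sum.inr (Sum.inl w))
    | Sum.inr (Sum.inr (Sum.inl _)) => FreeGroup.of (yGen X Y)
    | Sum.inr (Sum.inr (Sum.inr n)) =>
        FreeGroup.of (yGen X Y) * (FreeGroup.of (nGen X Y (n + 1)))⁻¹ *
          FreeGroup.of (nGen X Y n) * FreeGroup.of (nGen X Y (n + 1))

namespace ConstrAux

variable (X Y : Type)

/-- The abelianization map into the free abelian group on the generators. -/
noncomputable def psi : FreeGroup (ConstrGen X Y) →* Multiplicative (ConstrGen X Y →₀ ℤ) :=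
  FreeGroup.lift fun g => Multiplicative.ofAdd (Finsupp.single g 1)

lemma mem_commutator_iff_psi (a : FreeGroup (ConstrGen X Y)) :
    a ∈ commutator (FreeGroup (ConstrGen X Y)) ↔ psi X Y a = 1 := by
  constructor
  · intro h
    exact Abelianization.commutator_subset_ker (psi X Y) h
  · intro h
    -- retraction to the abelianization
    set s : Multiplicative (ConstrGen X Y →₀ ℤ) →* Abelianization (FreeGroup (ConstrGen X Y)) :=
      AddMonoidHom.toMultiplicativeLeft
        (Finsupp.liftAddHom fun g => (zmultiplesHom _)
          (Additive.ofMul (Abelianization.of (FreeGroup.of g)))) with hs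
    have key : s.comp (psi X Y) = Abelianization.of := by
      apply FreeGroup.ext_hom
      intro g
      simp [hs, psi, AddMonoidHom.toMultiplicativeLeft, Finsupp.liftAddHom_apply]
    have : Abelianization.of a = 1 := by
      rw [← key]
      simp [h]
    exact (QuotientGroup.eq_one_iff a).mp this

/-- The abelianized version of `constrPhi`. -/
noncomputable def phiAb : (ConstrGen X Y →₀ ℤ) →+ (ConstrGen X Y →₀ ℤ) :=
  Finsupp.liftAddHom fun g => match g with
    | Sum.inr (Sum.inr (Sum.inr n)) =>
        Finsupp.singleAddHom (yGen X Y) + Finsupp.singleAddHom (nGen X Y n)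
    | g => Finsupp.singleAddHom g

/-- Total `z`-coordinate sum. -/
noncomputable def cSum : (ConstrGen X Y →₀ ℤ) →+ ℤ :=
  Finsupp.liftAddHom fun g => match g with
    | Sum.inr (Sum.inr (Sum.inr _)) => AddMonoidHom.id ℤ
    | _ => 0

lemma phiAb_eq (f : ConstrGen X Y →₀ ℤ) :
    phiAb X Y f = f + Finsupp.single (yGen X Y) (cSum X Y f) := by
  have : phiAb X Y = AddMonoidHom.id _ +
      (Finsupp.singleAddHom (yGen X Y)).comp (cSum X Y) := by
    apply Finsupp.addHom_ext
    intro g n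
    rcases g with x | w | u | k <;>
      simp [phiAb, cSum, Finsupp.liftAddHom_apply, yGen] <;>
      abel
  rw [this]; rfl

lemma phiAb_injective : Function.Injective (phiAb X Y) := by
  rw [injective_iff_map_eq_zero]
  intro f hf
  rw [phiAb_eq] at hf
  have hn : ∀ k : ℕ, f (nGen X Y k) = 0 := by
    intro k
    have := DFunLike.congr_fun hf (nGen X Y k)
    simpa [yGen, nGen, Finsupp.single_apply] using this
  have hc : cSum X Y f = 0 := by
    rw [cSum, Finsupp.liftAddHom_apply]
    apply Finset.sum_eq_zero
    intro g hg
    rcases g with x | w | u | k <;> simp [nGen] <;> exact hn k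
  rw [hc] at hf
  simpa using hf

lemma psi_comp_phi :
    (psi X Y).comp (constrPhi X Y) =
      (AddMonoidHom.toMultiplicative (phiAb X Y)).comp (psi X Y) := by
  apply FreeGroup.ext_hom
  intro g
  rcases g with x | w | u | k <;>
    · simp only [MonoidHom.comp_apply, constrPhi, psi, FreeGroup.lift_apply_of, map_mul, map_inv,
        AddMonoidHom.toMultiplicative_apply_apply, toAdd_ofAdd, phiAb,
        Finsupp.liftAddHom_apply_single, yGen, nGen]
      try rfl
      try (apply Multiplicative.toAdd.injective; simp; abel)

lemma key_lemma (a : FreeGroup (ConstrGen X Y))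
    (h : constrPhi X Y a ∈ commutator (FreeGroup (ConstrGen X Y))) :
    a ∈ commutator (FreeGroup (ConstrGen X Y)) := by
  rw [mem_commutator_iff_psi] at h ⊢
  have := DFunLike.congr_fun (psi_comp_phi X Y) a
  simp only [MonoidHom.comp_apply] at this
  rw [this] at h
  have h0 : phiAb X Y (Multiplicative.toAdd (psi X Y a)) = 0 := by
    have := congrArg Multiplicative.toAdd h
    simpa using this
  have h1 : Multiplicative.toAdd (psi X Y a) = 0 :=
    phiAb_injective X Y (by simp [h0])
  apply Multiplicative.toAdd.injective
  simpa using h1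

end ConstrAux

/-- The equality `(φ(F_a))' = φ(F_a) ∩ F_b'` holds: the commutator subgroup of the
image `φ(F_a)` (viewed as a subgroup of `F_b`) equals the intersection of `φ(F_a)`
with the commutator subgroup of `F_b`. -/
theorem commutator_range_constrPhi (X Y : Type) :
    Subgroup.map (constrPhi X Y).range.subtype (commutator ↥(constrPhi X Y).range) =
      (constrPhi X Y).range ⊓ commutator (FreeGroup (ConstrGen X Y)) := by
  set φ := constrPhi X Y
  set H := φ.range
  have hmap : Subgroup.map H.subtype (commutator ↥H) = ⁅H, H⁆ := by
    rw [commutator_def, Subgroup.map_commutator, ← MonoidHom.range_eq_map, Subgroup.range_subtype]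
  rw [hmap]
  apply le_antisymm
  · rw [le_inf_iff]
    constructor
    · rw [Subgroup.commutator_le]
      intro g hg h hh
      rw [commutatorElement_def]
      exact H.mul_mem (H.mul_mem (H.mul_mem hg hh) (H.inv_mem hg)) (H.inv_mem hh)
    · rw [commutator_def]
      exact Subgroup.commutator_mono le_top le_top
  · rintro g ⟨⟨a, rfl⟩, hg2⟩
    have ha := ConstrAux.key_lemma X Y a hg2
    have hmem : φ a ∈ Subgroup.map φ (commutator (FreeGroup (ConstrGen X Y))) := ⟨a, ha, rfl⟩
    rwa [commutator_def, Subgroup.map_commutator, ← MonoidHom.range_eq_map] at hmem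
end

section
/- The induced homomorphism φ̄ : F_a/F_a' → F_b/F_b' between the abelianizations is an isomorphism. -/
/-- Abelianized inverse: `z_n ↦ y⁻¹ · t_n`, fixing the other generators. -/
def constrPsi (X Y : Type) : FreeGroup (ConstrGen X Y) →* FreeGroup (ConstrGen X Y) :=
  FreeGroup.lift fun g => match g with
    | Sum.inl x => FreeGroup.of (Sum.inl x)
    | Sum.inr (Sum.inl w) => FreeGroup.of (Sum.inr (Sum.inl w))
    | Sum.inr (Sum.inr (Sum.inl _)) => FreeGroup.of (yGen X Y)
    | Sum.inr (Sum.inr (Sum.inr n)) =>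
        (FreeGroup.of (yGen X Y))⁻¹ * FreeGroup.of (nGen X Y n)

theorem constr_phi_psi (X Y : Type) :
    (Abelianization.map (constrPhi X Y)).comp (Abelianization.map (constrPsi X Y)) =
      MonoidHom.id _ := by
  apply Abelianization.hom_ext
  apply FreeGroup.ext_hom
  intro g
  rcases g with x | w | u | n <;>
    simp [constrPhi, constrPsi, yGen, nGen, mul_assoc, mul_comm, mul_left_comm]

theorem constr_psi_phi (X Y : Type) :
    (Abelianization.map (constrPsi X Y)).comp (Abelianization.map (constrPhi X Y)) =
      MonoidHom.id _ := by
  apply Abelianization.hom_ext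
  apply FreeGroup.ext_hom
  intro g
  rcases g with x | w | u | n <;>
    simp [constrPhi, constrPsi, yGen, nGen, mul_assoc, mul_comm, mul_left_comm]

/-- The induced homomorphism `φ̄ : F_a/F_a' → F_b/F_b'` between the abelianizations
is an isomorphism. -/
theorem abelianization_map_constrPhi_bijective (X Y : Type) :
    Function.Bijective (Abelianization.map (constrPhi X Y)) := by
  refine Function.bijective_iff_has_inverse.2
    ⟨Abelianization.map (constrPsi X Y), ?_, ?_⟩
  · intro a; exact DFunLike.congr_fun (constr_psi_phi X Y) a
  · intro a; exact DFunLike.congr_fun (constr_phi_psi X Y) a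
end
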